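/- Let K be a field of characteristic ≠ 2 with [K^× : (K^×)²] = 2, let L = K(δ) with δ² ∈ K \ (K^×)² a quadratic extension, and let f be the nontrivial K-automorphism of L. Then the fixed-point subgroup C_{PSL₂(L)}(f) of the induced action of f on PSL₂(L) is isomorphic to PGL₂(K). -/

import Mathlib

open Matrix

variable (F : Type*) [Field F]

/-- `SL₂(F)`. -/
abbrev SL2 := Matrix.SpecialLinearGroup (Fin 2) F

/-- `PSL₂(F) = SL₂(F)/{±I}` (the center of `SL₂(F)`). -/
abbrev PSL2 := SL2 F ⧸ Subgroup.center (SL2 F)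

variable {F} in
/-- The diagonal matrix `diag(t, t⁻¹)` as an element of `SL₂(F)`. -/
def sl2diag (t : Fˣ) : SL2 F :=
  ⟨!![(t : F), 0; 0, ((t⁻¹ : Fˣ) : F)], by simp [Matrix.det_fin_two_of]⟩

variable {F} in
lemma center_le_comap (σ : F →+* F) :
    Subgroup.center (SL2 F) ≤
      Subgroup.comap (Matrix.SpecialLinearGroup.map σ) (Subgroup.center (SL2 F)) := by
  intro A hA
  rw [Subgroup.mem_comap, Matrix.SpecialLinearGroup.mem_center_iff] at *
  obtain ⟨r, hr, hrA⟩ := hA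
  refine ⟨σ r, by rw [← map_pow, hr, _root_.map_one], ?_⟩
  have : ((Matrix.SpecialLinearGroup.map σ A : SL2 F) : Matrix (Fin 2) (Fin 2) F)
      = (A : Matrix (Fin 2) (Fin 2) F).map σ := rfl
  rw [this, ← hrA]
  ext i j
  by_cases h : i = j <;>
    simp [Matrix.scalar_apply, Matrix.diagonal_apply, Matrix.map_apply, h]

variable {F} in
/-- The action of a field endomorphism `σ` of `F` on `PSL₂(F)`, induced by the
entrywise action on `SL₂(F)`. -/
def psl2Map (σ : F →+* F) : PSL2 F →* PSL2 F :=
  QuotientGroup.map _ _ (Matrix.SpecialLinearGroup.map σ) (center_le_comap σ)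

variable {F} in
/-- The fixed-point subgroup of a field endomorphism `σ` acting on `PSL₂(F)`. -/
def fixedPts (σ : F →+* F) : Subgroup (PSL2 F) where
  carrier := {x | psl2Map σ x = x}
  one_mem' := map_one _
  mul_mem' := by
    intro a b ha hb
    simp only [Set.mem_setOf_eq, _root_.map_mul] at *
    rw [ha, hb]
  inv_mem' := by
    intro a ha
    simp only [Set.mem_setOf_eq, _root_.map_inv] at *
    rw [ha]

/-- `PGL₂(F) = GL₂(F)` modulo its center (the scalar matrices). -/
abbrev PGL2 := GL (Fin 2) F ⧸ Subgroup.center (GL (Fin 2) F)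

section MyHelpers
variable {F : Type*} [Field F]


lemma my_sq_cases {a b : F} (h : a ^ 2 = b ^ 2) : a = b ∨ a = -b := by
  have h2 : (a - b) * (a + b) = 0 := by linear_combination h
  rcases mul_eq_zero.1 h2 with h3 | h3
  · exact Or.inl (sub_eq_zero.1 h3)
  · exact Or.inr (eq_neg_of_add_eq_zero_left h3)

lemma my_diag_neg_one : (Matrix.diagonal (fun _ : Fin 2 => (-1 : F))) = -1 := by
  ext i j
  by_cases h : i = j <;>
    simp [Matrix.diagonal_apply, Matrix.neg_apply, Matrix.one_apply, h]

/-- `-1` in `SL2`. -/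
def sl2NegOne (F : Type*) [Field F] : SL2 F :=
  ⟨-1, by simp [Matrix.det_neg]⟩

lemma sl2NegOne_mem_center : sl2NegOne F ∈ Subgroup.center (SL2 F) := by
  rw [Matrix.SpecialLinearGroup.mem_center_iff]
  exact ⟨-1, by norm_num, by simp [sl2NegOne, Matrix.scalar_apply, my_diag_neg_one]⟩

lemma psl2_mk_eq_of_neg (A B : SL2 F)
    (h : (A : Matrix (Fin 2) (Fin 2) F) = -(B : Matrix (Fin 2) (Fin 2) F)) :
    (QuotientGroup.mk A : PSL2 F) = QuotientGroup.mk B := by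
  have hAB : A = B * sl2NegOne F := by
    apply Subtype.ext
    show (A : Matrix (Fin 2) (Fin 2) F) = (B : Matrix (Fin 2) (Fin 2) F) * (-1 : Matrix (Fin 2) (Fin 2) F)
    simpa using h
  rw [hAB, QuotientGroup.mk_mul, (QuotientGroup.eq_one_iff _).2 (sl2NegOne_mem_center), mul_one]

lemma psl2_mk_eq_of_pm (A B : SL2 F)
    (h : (A : Matrix (Fin 2) (Fin 2) F) = (B : Matrix (Fin 2) (Fin 2) F)
      ∨ (A : Matrix (Fin 2) (Fin 2) F) = -(B : Matrix (Fin 2) (Fin 2) F)) :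
    (QuotientGroup.mk A : PSL2 F) = QuotientGroup.mk B := by
  rcases h with h | h
  · exact congrArg _ (Subtype.ext h)
  · exact psl2_mk_eq_of_neg A B h

lemma mem_center_sl2 (A : SL2 F) (h : A ∈ Subgroup.center (SL2 F)) :
    (A : Matrix (Fin 2) (Fin 2) F) = 1 ∨ (A : Matrix (Fin 2) (Fin 2) F) = -1 := by
  rw [Matrix.SpecialLinearGroup.mem_center_iff] at h
  obtain ⟨r, hr, hrA⟩ := h
  have hr2 : r ^ 2 = 1 ^ 2 := by simpa using hr
  rcases my_sq_cases hr2 with h1 | h1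
  · left; rw [← hrA, h1]; simp
  · right; rw [← hrA, h1]; simp [Matrix.scalar_apply, my_diag_neg_one]

lemma scalar_mem_center_gl (c : F) (M : GL (Fin 2) F)
    (hM : (M : Matrix (Fin 2) (Fin 2) F) = c • (1 : Matrix (Fin 2) (Fin 2) F)) :
    M ∈ Subgroup.center (GL (Fin 2) F) := by
  rw [Subgroup.mem_center_iff]
  intro B
  apply Units.ext
  show (B : Matrix (Fin 2) (Fin 2) F) * M = (M : Matrix (Fin 2) (Fin 2) F) * B
  rw [hM, smul_mul_assoc, mul_smul_comm, one_mul, mul_one]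

lemma mem_center_gl2 (M : GL (Fin 2) F) (h : M ∈ Subgroup.center (GL (Fin 2) F)) :
    (M : Matrix (Fin 2) (Fin 2) F) = ((M : Matrix (Fin 2) (Fin 2) F) 0 0) • 1 := by
  rw [Subgroup.mem_center_iff] at h
  set m : Matrix (Fin 2) (Fin 2) F := (M : Matrix (Fin 2) (Fin 2) F) with hm
  have hU : ((!![1,1;0,1] : Matrix (Fin 2) (Fin 2) F)).det ≠ 0 := by
    simp [Matrix.det_fin_two_of]
  have hV : ((!![1,0;1,1] : Matrix (Fin 2) (Fin 2) F)).det ≠ 0 := by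
    simp [Matrix.det_fin_two_of]
  have hUm : (!![1,1;0,1] : Matrix (Fin 2) (Fin 2) F) * m = m * !![1,1;0,1] :=
    congrArg Units.val (h (Matrix.GeneralLinearGroup.mkOfDetNeZero _ hU))
  have hVm : (!![1,0;1,1] : Matrix (Fin 2) (Fin 2) F) * m = m * !![1,0;1,1] :=
    congrArg Units.val (h (Matrix.GeneralLinearGroup.mkOfDetNeZero _ hV))
  have q1 : ((!![1,1;0,1] : Matrix (Fin 2) (Fin 2) F) * m) 0 0 = ((m * !![1,1;0,1] : Matrix (Fin 2) (Fin 2) F)) 0 0 := by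
    rw [hUm]
  have q2 : ((!![1,1;0,1] : Matrix (Fin 2) (Fin 2) F) * m) 0 1 = ((m * !![1,1;0,1] : Matrix (Fin 2) (Fin 2) F)) 0 1 := by
    rw [hUm]
  have q3 : ((!![1,0;1,1] : Matrix (Fin 2) (Fin 2) F) * m) 0 0 = ((m * !![1,0;1,1] : Matrix (Fin 2) (Fin 2) F)) 0 0 := by
    rw [hVm]
  simp [Matrix.mul_apply, Fin.sum_univ_two] at q1 q2 q3
  ext i j
  fin_cases i <;> fin_cases j <;>
    simp [Matrix.smul_apply, Matrix.one_apply]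
  · linear_combination q3
  · linear_combination q1
  · linear_combination q2

lemma sl2_scalar_mem_center (r : F) (A : SL2 F) (h : (A : Matrix (Fin 2) (Fin 2) F) = r • 1) :
    A ∈ Subgroup.center (SL2 F) := by
  rw [Matrix.SpecialLinearGroup.mem_center_iff]
  have hr2 : r ^ 2 = 1 := by
    have hd := A.property
    rw [h, Matrix.det_smul, Matrix.det_one] at hd
    simpa using hd
  exact ⟨r, by simpa using hr2, by rw [Matrix.scalar_apply, ← Matrix.smul_one_eq_diagonal, h]⟩
end MyHelpers

section Main
variable {K L : Type*} [Field K] [Field L] [Algebra K L]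
  (hchar : ringChar K ≠ 2)
  (hsq : ((powMonoidHom 2 : Kˣ →* Kˣ).range).index = 2)
  (f : L ≃ₐ[K] L) (hf : f ≠ AlgEquiv.refl)
  (δ : Lˣ) {ca : K} (hca : algebraMap K L ca = (δ : L) ^ 2)
  (hcasq : ¬ ∃ y : K, y ^ 2 = ca)
  (hgen : Algebra.adjoin K {(δ : L)} = ⊤)

include hca hcasq in
lemma ca_ne_zero : ca ≠ 0 := by
  intro h
  apply δ.ne_zero
  have := hca
  rw [h, map_zero] at this
  exact pow_eq_zero_iff (n := 2) (by norm_num) |>.1 this.symm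

include hchar in
lemma two_ne_zero_L : (2 : L) ≠ 0 := by
  intro h
  have h2 : algebraMap K L 2 = 0 := by rw [map_ofNat]; exact_mod_cast h
  exact Ring.two_ne_zero hchar ((map_eq_zero_iff _ (algebraMap K L).injective).1 h2)

include hca hgen in
lemma decomp : ∀ x : L, ∃ a b : K, x = algebraMap K L a + algebraMap K L b * δ := by
  intro x
  let S : Subalgebra K L :=
  { carrier := {x | ∃ a b : K, x = algebraMap K L a + algebraMap K L b * δ}
    mul_mem' := by
      rintro x y ⟨a, b, rfl⟩ ⟨c, d, rfl⟩
      refine ⟨a * c + b * d * ca, a * d + b * c, ?_⟩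
      simp only [map_add, _root_.map_mul]
      linear_combination (-(algebraMap K L b * algebraMap K L d)) * hca
    one_mem' := ⟨1, 0, by simp⟩
    add_mem' := by
      rintro x y ⟨a, b, rfl⟩ ⟨c, d, rfl⟩
      exact ⟨a + c, b + d, by simp only [map_add]; ring⟩
    zero_mem' := ⟨0, 0, by simp⟩
    algebraMap_mem' := fun c => ⟨c, 0, by simp⟩ }
  have h1 : Algebra.adjoin K {(δ : L)} ≤ S := by
    apply Algebra.adjoin_le
    intro y hy
    rw [Set.mem_singleton_iff] at hy
    exact ⟨0, 1, by simp [hy]⟩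
  rw [hgen] at h1
  exact h1 (by trivial : x ∈ (⊤ : Subalgebra K L))

include hchar hca hcasq hgen hf in
lemma f_delta : f (δ : L) = -(δ : L) := by
  have hsq2 : (f (δ : L)) ^ 2 = ((δ : L)) ^ 2 := by
    rw [← map_pow, ← hca, AlgEquiv.commutes, hca]
  rcases my_sq_cases hsq2 with h | h
  · exfalso
    apply hf
    apply AlgEquiv.ext
    intro x
    obtain ⟨a, b, rfl⟩ := decomp (δ := δ) hca hgen x
    simp [map_add, _root_.map_mul, AlgEquiv.commutes, h]
  · exact h

include hchar hca hcasq hgen hf in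
lemma fixed_elem : ∀ x : L, f x = x → ∃ c : K, algebraMap K L c = x := by
  intro x hx
  obtain ⟨a, b, rfl⟩ := decomp (δ := δ) hca hgen x
  have hfd := f_delta hchar f hf δ hca hcasq hgen
  rw [map_add, _root_.map_mul, AlgEquiv.commutes, AlgEquiv.commutes, hfd] at hx
  have hb : algebraMap K L b * (δ : L) * 2 = 0 := by linear_combination -hx
  rcases mul_eq_zero.1 hb with h1 | h1
  · rcases mul_eq_zero.1 h1 with h2 | h2
    · refine ⟨a, ?_⟩
      rw [h2]; ring
    · exact absurd h2 δ.ne_zero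
  · exact absurd h1 (two_ne_zero_L hchar)

include hchar hca hcasq hgen hf in
lemma anti_elem : ∀ x : L, f x = -x → ∃ c : K, algebraMap K L c * (δ : L) = x := by
  intro x hx
  obtain ⟨a, b, rfl⟩ := decomp (δ := δ) hca hgen x
  have hfd := f_delta hchar f hf δ hca hcasq hgen
  rw [map_add, _root_.map_mul, AlgEquiv.commutes, AlgEquiv.commutes, hfd] at hx
  have ha : algebraMap K L a * 2 = 0 := by linear_combination hx
  rcases mul_eq_zero.1 ha with h1 | h1
  · refine ⟨b, ?_⟩
    rw [h1]; ring
  · exact absurd h1 (two_ne_zero_L hchar)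

include hsq hca hcasq in
lemma sqrt_exists : ∀ c : K, c ≠ 0 → ∃ s : L, s ≠ 0 ∧ s ^ 2 = algebraMap K L c := by
  intro c hc0
  by_cases hc : ∃ y : K, y ^ 2 = c
  · obtain ⟨y, hy⟩ := hc
    have hy0 : y ≠ 0 := by rintro rfl; rw [← hy] at hc0; simp at hc0
    exact ⟨algebraMap K L y,
      (map_ne_zero_iff _ (algebraMap K L).injective).2 hy0, by rw [← map_pow, hy]⟩
  · have hca0 : ca ≠ 0 := ca_ne_zero δ hca hcasq
    set H := ((powMonoidHom 2 : Kˣ →* Kˣ).range) with hH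
    have hcu : Units.mk0 c hc0 ∉ H := by
      rintro ⟨u, hu⟩
      exact hc ⟨(u : K), by
        have := congrArg Units.val hu
        simpa [powMonoidHom] using this⟩
    have hcau : Units.mk0 ca hca0 ∉ H := by
      rintro ⟨u, hu⟩
      exact hcasq ⟨(u : K), by
        have := congrArg Units.val hu
        simpa [powMonoidHom] using this⟩
    have hmem : Units.mk0 c hc0 * (Units.mk0 ca hca0)⁻¹ ∈ H := by
      rw [Subgroup.mul_mem_iff_of_index_two hsq]
      rw [inv_mem_iff]
      exact iff_of_false hcu hcau
    obtain ⟨t, ht⟩ := hmem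
    have ht2 : (t : K) ^ 2 * ca = c := by
      have := congrArg (fun u : Kˣ => (u : K) * ca) ht
      simpa [powMonoidHom, mul_assoc, inv_mul_cancel₀ hca0] using this
    refine ⟨(δ : L) * algebraMap K L (t : K), ?_, ?_⟩
    · exact mul_ne_zero δ.ne_zero ((map_ne_zero_iff _ (algebraMap K L).injective).2 t.ne_zero)
    · rw [mul_pow, ← hca, ← map_pow, ← _root_.map_mul, mul_comm ca _, ht2]
end Main

/-- Let `K` be a field of characteristic ≠ 2 with `[K^× : (K^×)²] = 2`,
let `L = K(δ)` be a quadratic extension with `δ² ∈ K \ (K^×)²`, and let `f` be the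
nontrivial `K`-automorphism of `L`. Then the fixed-point subgroup `C_{PSL₂(L)}(f)` of
the induced action of `f` on `PSL₂(L)` is isomorphic to `PGL₂(K)`. -/

theorem stmt16 {K L : Type*} [Field K] [Field L] [Algebra K L]
    (hchar : ringChar K ≠ 2)
    (hsq : ((powMonoidHom 2 : Kˣ →* Kˣ).range).index = 2)
    (hdim : Module.finrank K L = 2)
    (f : L ≃ₐ[K] L) (hf : f ≠ AlgEquiv.refl)
    (δ : Lˣ) (hδK : ∃ c : K, algebraMap K L c = (δ : L) ^ 2 ∧ ¬ ∃ y : K, y ^ 2 = c)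
    (hgen : Algebra.adjoin K {(δ : L)} = ⊤) :
    Nonempty (fixedPts (f : L →+* L) ≃* PGL2 K) := by
  classical
  obtain ⟨ca, hca, hcasq⟩ := hδK
  -- square roots of determinants
  have hdetne : ∀ M : GL (Fin 2) K, ((M : Matrix (Fin 2) (Fin 2) K)).det ≠ 0 := fun M =>
    ((Matrix.isUnit_iff_isUnit_det _).1 ⟨M, rfl⟩).ne_zero
  have hsqrtM : ∀ M : GL (Fin 2) K,
      ∃ t : L, t ≠ 0 ∧ t ^ 2 = algebraMap K L ((M : Matrix (Fin 2) (Fin 2) K)).det :=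
    fun M => sqrt_exists hsq δ hca hcasq _ (hdetne M)
  choose s hs0 hs2 using hsqrtM
  have hdet1 : ∀ M : GL (Fin 2) K,
      ((s M)⁻¹ • ((M : Matrix (Fin 2) (Fin 2) K)).map (algebraMap K L)).det = 1 := by
    intro M
    have hmapdet : (((M : Matrix (Fin 2) (Fin 2) K)).map (algebraMap K L)).det
        = algebraMap K L ((M : Matrix (Fin 2) (Fin 2) K)).det := by
      rw [RingHom.map_det]; rfl
    rw [Matrix.det_smul, hmapdet, ← hs2 M, Fintype.card_fin]
    rw [inv_pow]
    exact inv_mul_cancel₀ (pow_ne_zero 2 (hs0 M))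
  set Asl : GL (Fin 2) K → SL2 L := fun M =>
    ⟨(s M)⁻¹ • ((M : Matrix (Fin 2) (Fin 2) K)).map (algebraMap K L), hdet1 M⟩ with hAsl
  have hAval : ∀ M : GL (Fin 2) K, (Asl M : Matrix (Fin 2) (Fin 2) L)
      = (s M)⁻¹ • ((M : Matrix (Fin 2) (Fin 2) K)).map (algebraMap K L) := fun _ => rfl
  have hmul : ∀ M N : GL (Fin 2) K, (QuotientGroup.mk (Asl (M * N)) : PSL2 L)
      = QuotientGroup.mk (Asl M) * QuotientGroup.mk (Asl N) := by
    intro M N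
    rw [← QuotientGroup.mk_mul]
    apply psl2_mk_eq_of_pm
    have hdet : ((M * N : GL (Fin 2) K) : Matrix (Fin 2) (Fin 2) K).det
        = ((M : Matrix (Fin 2) (Fin 2) K)).det * ((N : Matrix (Fin 2) (Fin 2) K)).det := by
      rw [Units.val_mul, Matrix.det_mul]
    have hsq' : s (M * N) ^ 2 = (s M * s N) ^ 2 := by
      rw [hs2, hdet, _root_.map_mul, mul_pow, hs2, hs2]
    have hprod : ((Asl M * Asl N : SL2 L) : Matrix (Fin 2) (Fin 2) L)
        = (s M * s N)⁻¹ • (((M * N : GL (Fin 2) K) : Matrix (Fin 2) (Fin 2) K)).map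
            (algebraMap K L) := by
      show (Asl M : Matrix (Fin 2) (Fin 2) L) * (Asl N : Matrix (Fin 2) (Fin 2) L) = _
      rw [hAval, hAval, Units.val_mul, Matrix.map_mul, mul_inv, smul_mul_assoc,
        mul_smul_comm, smul_smul]
    rcases my_sq_cases hsq' with h | h
    · left; rw [hAval, hprod, h]
    · right; rw [hAval, hprod, h, inv_neg, neg_smul]
  set ψ : GL (Fin 2) K →* PSL2 L :=
    MonoidHom.mk' (fun M => QuotientGroup.mk (Asl M)) hmul with hψ
  have hker : ψ.ker = Subgroup.center (GL (Fin 2) K) := by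
    ext M
    rw [MonoidHom.mem_ker]
    constructor
    · intro h
      have hc : Asl M ∈ Subgroup.center (SL2 L) := (QuotientGroup.eq_one_iff _).1 h
      have h2 := mem_center_sl2 _ hc
      have hMmap : ∃ u : L, ((M : Matrix (Fin 2) (Fin 2) K)).map (algebraMap K L)
          = u • (1 : Matrix (Fin 2) (Fin 2) L) := by
        have hX : ((M : Matrix (Fin 2) (Fin 2) K)).map (algebraMap K L)
            = s M • ((s M)⁻¹ • ((M : Matrix (Fin 2) (Fin 2) K)).map (algebraMap K L)) :=
          (smul_inv_smul₀ (hs0 M) _).symm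
        rcases h2 with h2 | h2
        all_goals rw [hAval] at h2
        · exact ⟨s M, by rw [hX, h2]⟩
        · exact ⟨-(s M), by rw [hX, h2, smul_neg, neg_smul]⟩
      obtain ⟨u, hu⟩ := hMmap
      have hent : ∀ i j, algebraMap K L ((M : Matrix (Fin 2) (Fin 2) K) i j)
          = u * (1 : Matrix (Fin 2) (Fin 2) L) i j := by
        intro i j
        have := congrFun (congrFun hu i) j
        simpa [Matrix.map_apply, Matrix.smul_apply] using this
      apply scalar_mem_center_gl ((M : Matrix (Fin 2) (Fin 2) K) 0 0)
      have h01 : (M : Matrix (Fin 2) (Fin 2) K) 0 1 = 0 := by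
        apply (algebraMap K L).injective
        rw [map_zero]
        simpa [Matrix.one_apply] using hent 0 1
      have h10 : (M : Matrix (Fin 2) (Fin 2) K) 1 0 = 0 := by
        apply (algebraMap K L).injective
        rw [map_zero]
        simpa [Matrix.one_apply] using hent 1 0
      have h11 : (M : Matrix (Fin 2) (Fin 2) K) 1 1 = (M : Matrix (Fin 2) (Fin 2) K) 0 0 := by
        apply (algebraMap K L).injective
        have e1 := hent 1 1
        have e2 := hent 0 0
        simp [Matrix.one_apply] at e1 e2
        rw [e1, e2]
      ext i j
      fin_cases i <;> fin_cases j <;>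
        simp [Matrix.smul_apply, Matrix.one_apply, h01, h10, h11]
    · intro h
      have h2 := mem_center_gl2 M h
      set c := (M : Matrix (Fin 2) (Fin 2) K) 0 0 with hc
      rw [hψ]
      show (QuotientGroup.mk (Asl M) : PSL2 L) = 1
      rw [QuotientGroup.eq_one_iff]
      apply sl2_scalar_mem_center ((s M)⁻¹ * algebraMap K L c)
      rw [hAval, h2]
      have hm1 : ((c • (1 : Matrix (Fin 2) (Fin 2) K)).map (algebraMap K L))
          = algebraMap K L c • (1 : Matrix (Fin 2) (Fin 2) L) := by
        ext i j
        by_cases hij : i = j <;>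
          simp [Matrix.map_apply, Matrix.smul_apply, Matrix.one_apply, hij]
      rw [hm1, smul_smul]
  have hrange : ψ.range = fixedPts (f : L →+* L) := by
    have hcoef : ∀ y : L, (f : L →+* L) y = f y := fun _ => rfl
    ext x
    constructor
    · rintro ⟨M, rfl⟩
      show psl2Map (f : L →+* L) (QuotientGroup.mk (Asl M)) = QuotientGroup.mk (Asl M)
      rw [psl2Map, QuotientGroup.map_mk]
      apply psl2_mk_eq_of_pm
      have hfs2 : (f (s M)) ^ 2 = (s M) ^ 2 := by
        rw [← map_pow, hs2, AlgEquiv.commutes]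
      have hmapval : ((Matrix.SpecialLinearGroup.map (f : L →+* L) (Asl M))
          : Matrix (Fin 2) (Fin 2) L)
          = (f (s M))⁻¹ • ((M : Matrix (Fin 2) (Fin 2) K)).map (algebraMap K L) := by
        show ((Asl M : Matrix (Fin 2) (Fin 2) L)).map (f : L →+* L) = _
        rw [hAval]
        ext i j
        simp only [Matrix.map_apply, Matrix.smul_apply, smul_eq_mul, hcoef, _root_.map_mul,
          map_inv₀, AlgEquiv.commutes]
      rcases my_sq_cases hfs2 with h | h
      · left; rw [hmapval, h, hAval]
      · right; rw [hmapval, h, inv_neg, neg_smul, hAval]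
    · intro hx
      obtain ⟨A, rfl⟩ := QuotientGroup.mk_surjective x
      have hx1 : (QuotientGroup.mk (Matrix.SpecialLinearGroup.map (f : L →+* L) A)
          : PSL2 L) = QuotientGroup.mk A := by
        have hx0 : psl2Map (f : L →+* L) (QuotientGroup.mk A) = QuotientGroup.mk A := hx
        rw [psl2Map, QuotientGroup.map_mk] at hx0
        exact hx0
      have hz : (Matrix.SpecialLinearGroup.map (f : L →+* L) A)⁻¹ * A
          ∈ Subgroup.center (SL2 L) := QuotientGroup.eq.1 hx1
      have hz2 := mem_center_sl2 _ hz
      have hA2 : A = (Matrix.SpecialLinearGroup.map (f : L →+* L) A)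
          * ((Matrix.SpecialLinearGroup.map (f : L →+* L) A)⁻¹ * A) := by
        rw [mul_inv_cancel_left]
      have hAf : (A : Matrix (Fin 2) (Fin 2) L).map (f : L →+* L) = (A : Matrix (Fin 2) (Fin 2) L)
          ∨ (A : Matrix (Fin 2) (Fin 2) L).map (f : L →+* L)
            = -(A : Matrix (Fin 2) (Fin 2) L) := by
        rcases hz2 with h | h
        · left
          have hz1 : (Matrix.SpecialLinearGroup.map (f : L →+* L) A)⁻¹ * A = (1 : SL2 L) :=
            Subtype.ext h
          have h6 : Matrix.SpecialLinearGroup.map (f : L →+* L) A = A := by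
            conv_rhs => rw [hA2]
            rw [hz1, mul_one]
          exact congrArg Subtype.val h6
        · right
          have hz1 : (Matrix.SpecialLinearGroup.map (f : L →+* L) A)⁻¹ * A = sl2NegOne L :=
            Subtype.ext h
          have h5 : (A : Matrix (Fin 2) (Fin 2) L)
              = -((Matrix.SpecialLinearGroup.map (f : L →+* L) A) : Matrix (Fin 2) (Fin 2) L) := by
            conv_lhs => rw [hA2, hz1]
            show ((Matrix.SpecialLinearGroup.map (f : L →+* L) A) : Matrix (Fin 2) (Fin 2) L)
              * (-1 : Matrix (Fin 2) (Fin 2) L) = _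
            rw [mul_neg_one]
          show ((Matrix.SpecialLinearGroup.map (f : L →+* L) A) : Matrix (Fin 2) (Fin 2) L)
            = -(A : Matrix (Fin 2) (Fin 2) L)
          rw [h5, neg_neg]
      rcases hAf with hcase | hcase
      · -- f fixes all entries of A
        have hent : ∀ i j, ∃ c : K, algebraMap K L c = (A : Matrix (Fin 2) (Fin 2) L) i j := by
          intro i j
          apply fixed_elem hchar f hf δ hca hcasq hgen
          have := congrFun (congrFun hcase i) j
          simpa [Matrix.map_apply, hcoef] using this
        choose N0 hN using hent
        set N : Matrix (Fin 2) (Fin 2) K := Matrix.of N0 with hNdef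
        have hNmap : (N.map (algebraMap K L)) = (A : Matrix (Fin 2) (Fin 2) L) := by
          ext i j; simp [Matrix.map_apply, hNdef, Matrix.of_apply, hN]
        have hNdet : N.det = 1 := by
          apply (algebraMap K L).injective
          rw [RingHom.map_det, _root_.map_one]
          show (N.map (algebraMap K L)).det = 1
          rw [hNmap]; exact A.property
        refine ⟨Matrix.GeneralLinearGroup.mkOfDetNeZero N (by rw [hNdet]; exact one_ne_zero), ?_⟩
        show (QuotientGroup.mk (Asl _) : PSL2 L) = QuotientGroup.mk A
        apply psl2_mk_eq_of_pm
        set M' := Matrix.GeneralLinearGroup.mkOfDetNeZero N (by rw [hNdet]; exact one_ne_zero)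
          with hM'def
        have hM'val : (M' : Matrix (Fin 2) (Fin 2) K) = N := rfl
        have hsM' : s M' ^ 2 = 1 ^ 2 := by
          rw [hs2, hM'val, hNdet, _root_.map_one, one_pow]
        rcases my_sq_cases hsM' with h | h
        · left; rw [hAval, hM'val, hNmap, h, inv_one, one_smul]
        · right; rw [hAval, hM'val, hNmap, h, inv_neg, inv_one, neg_smul, one_smul]
      · -- f negates all entries of A
        have hent : ∀ i j, ∃ c : K,
            algebraMap K L c * (δ : L) = (A : Matrix (Fin 2) (Fin 2) L) i j := by
          intro i j
          apply anti_elem hchar f hf δ hca hcasq hgen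
          have := congrFun (congrFun hcase i) j
          simpa [Matrix.map_apply, Matrix.neg_apply, hcoef] using this
        choose N0 hN using hent
        set N : Matrix (Fin 2) (Fin 2) K := Matrix.of N0 with hNdef
        have hNmap : (δ : L) • (N.map (algebraMap K L)) = (A : Matrix (Fin 2) (Fin 2) L) := by
          ext i j
          show (δ : L) * algebraMap K L (N0 i j) = (A : Matrix (Fin 2) (Fin 2) L) i j
          rw [mul_comm]; exact hN i j
        have hNdet : ca * N.det = 1 := by
          apply (algebraMap K L).injective
          rw [_root_.map_one, _root_.map_mul, hca, RingHom.map_det]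
          show (δ : L) ^ 2 * (N.map (algebraMap K L)).det = 1
          have h7 : ((δ : L) • (N.map (algebraMap K L))).det = 1 := by
            rw [hNmap]; exact A.property
          rw [Matrix.det_smul, Fintype.card_fin] at h7
          exact h7
        have hNdet0 : N.det ≠ 0 := by
          intro h0
          rw [h0, mul_zero] at hNdet
          exact one_ne_zero hNdet.symm
        refine ⟨Matrix.GeneralLinearGroup.mkOfDetNeZero N hNdet0, ?_⟩
        show (QuotientGroup.mk (Asl _) : PSL2 L) = QuotientGroup.mk A
        apply psl2_mk_eq_of_pm
        set M' := Matrix.GeneralLinearGroup.mkOfDetNeZero N hNdet0 with hM'def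
        have hM'val : (M' : Matrix (Fin 2) (Fin 2) K) = N := rfl
        have hδinv : ((δ : L)⁻¹) ^ 2 = algebraMap K L N.det := by
          have h5 : algebraMap K L ca * algebraMap K L N.det = 1 := by
            rw [← _root_.map_mul, hNdet, _root_.map_one]
          rw [inv_pow, ← hca]
          exact (eq_inv_of_mul_eq_one_left (by rw [mul_comm]; exact h5)).symm
        have hsM' : s M' ^ 2 = ((δ : L)⁻¹) ^ 2 := by rw [hs2, hM'val, hδinv]
        rcases my_sq_cases hsM' with h | h
        · left
          rw [hAval, hM'val, h, inv_inv, ← hNmap]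
        · right
          rw [hAval, hM'val, h, inv_neg, inv_inv, neg_smul, ← hNmap]
  -- assemble the isomorphism
  refine ⟨?_⟩
  have e1 : PGL2 K ≃* GL (Fin 2) K ⧸ ψ.ker :=
    QuotientGroup.quotientMulEquivOfEq hker.symm
  have e2 : (GL (Fin 2) K ⧸ ψ.ker) ≃* ψ.range := QuotientGroup.quotientKerEquivRange ψ
  have e3 : ψ.range ≃* fixedPts (f : L →+* L) := MulEquiv.subgroupCongr hrange
  exact ((e1.trans e2).trans e3).symm
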